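/- Let H₁ be a Hermitian N×N matrix with maximal eigenvalue λ_max and minimal eigenvalue λ_min, and suppose for every μ ∈ ℝ the matrix H₀ + μH₁ has N distinct eigenvalues. Let v^max(μ) and v_min(μ) be continuously chosen unit eigenvectors of (H₀+μH₁)/(|μ|+1) corresponding to its largest and smallest eigenvalues. Then either λ_max = λ_min (H₁ is a scalar multiple of I), or there exists a finite μ with ⟨v^max(μ), H₁ v^max(μ)⟩ = ⟨v_min(μ), H₁ v_min(μ)⟩. -/

import Mathlib

open Matrix

lemma aux_mem_spectrum {N : ℕ} (M : Matrix (Fin N) (Fin N) ℂ) (v : Fin N → ℂ) (hv : v ≠ 0)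
    (c : ℂ) (h : M *ᵥ v = c • v) : c ∈ spectrum ℂ M := by
  rw [spectrum.mem_iff]
  intro hu
  obtain ⟨u, hu'⟩ := hu
  apply hv
  have h0 : (algebraMap ℂ (Matrix (Fin N) (Fin N) ℂ) c - M) *ᵥ v = 0 := by
    rw [sub_mulVec, h, Algebra.algebraMap_eq_smul_one, smul_mulVec, one_mulVec, sub_self]
  calc v = (↑u⁻¹ * ↑u) *ᵥ v := by rw [Units.inv_mul, one_mulVec]
  _ = ↑u⁻¹ *ᵥ ((↑u : Matrix (Fin N) (Fin N) ℂ) *ᵥ v) := by rw [mulVec_mulVec]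
  _ = 0 := by rw [hu', h0, mulVec_zero]

lemma rayleigh_repr {N : ℕ} {M : Matrix (Fin N) (Fin N) ℂ} (hM : M.IsHermitian)
    (x : Fin N → ℂ) (hx : star x ⬝ᵥ x = 1) :
    ∃ w : Fin N → ℝ, (∀ i, 0 ≤ w i) ∧ (∑ i, w i = 1) ∧
      (star x ⬝ᵥ M *ᵥ x).re = ∑ i, w i * hM.eigenvalues i := by
  classical
  set U : Matrix (Fin N) (Fin N) ℂ := (hM.eigenvectorUnitary : Matrix (Fin N) (Fin N) ℂ) with hU
  set y : Fin N → ℂ := star U *ᵥ x with hy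
  have hUU : U * star U = 1 := (Matrix.mem_unitaryGroup_iff).mp hM.eigenvectorUnitary.2
  have hyx : star y = star x ᵥ* U := by
    rw [hy, star_mulVec, star_eq_conjTranspose, conjTranspose_conjTranspose]
  have hnorm : star y ⬝ᵥ y = 1 := by
    rw [hyx, hy, dotProduct_mulVec, vecMul_vecMul, hUU, vecMul_one, hx]
  have hspec : M = U * diagonal (RCLike.ofReal ∘ hM.eigenvalues) * star U := hM.spectral_theorem
  have key : star x ⬝ᵥ M *ᵥ x = star y ⬝ᵥ (diagonal (RCLike.ofReal ∘ hM.eigenvalues)) *ᵥ y := by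
    conv_lhs => rw [hspec]
    rw [hyx, hy, ← mulVec_mulVec, ← mulVec_mulVec, dotProduct_mulVec]
  refine ⟨fun i => Complex.normSq (y i), fun i => Complex.normSq_nonneg _, ?_, ?_⟩
  · have := congrArg Complex.re hnorm
    rw [dotProduct] at this
    simpa [Complex.mul_re, Complex.normSq_apply] using this
  · rw [key, dotProduct]
    simp only [mulVec_diagonal, Pi.star_apply, Function.comp_apply]
    rw [Complex.re_sum]
    congr 1
    ext i
    simp [Complex.mul_re, Complex.normSq_apply, RCLike.ofReal]
    ring

lemma eig_mem_spectrum {N : ℕ} {M : Matrix (Fin N) (Fin N) ℂ} (hM : M.IsHermitian) (i : Fin N) :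
    ((hM.eigenvalues i : ℂ)) ∈ spectrum ℂ M := by
  refine aux_mem_spectrum M (⇑(hM.eigenvectorBasis i)) (fun h => hM.eigenvectorBasis.orthonormal.ne_zero i (by simpa using congrArg (WithLp.toLp 2) h)) _ ?_
  rw [hM.mulVec_eigenvectorBasis]
  ext j
  simp [Complex.real_smul]

lemma rayleigh_le {N : ℕ} {M : Matrix (Fin N) (Fin N) ℂ} (hM : M.IsHermitian)
    (x : Fin N → ℂ) (hx : star x ⬝ᵥ x = 1) (b : ℝ)
    (hb : ∀ z ∈ spectrum ℂ M, z.re ≤ b) :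
    (star x ⬝ᵥ M *ᵥ x).re ≤ b := by
  obtain ⟨w, hw0, hw1, hrepr⟩ := rayleigh_repr hM x hx
  rw [hrepr]
  calc ∑ i, w i * hM.eigenvalues i ≤ ∑ i, w i * b := by
        apply Finset.sum_le_sum
        intro i _
        exact mul_le_mul_of_nonneg_left (by simpa using hb _ (eig_mem_spectrum hM i)) (hw0 i)
  _ = b := by rw [← Finset.sum_mul, hw1, one_mul]

lemma rayleigh_ge {N : ℕ} {M : Matrix (Fin N) (Fin N) ℂ} (hM : M.IsHermitian)
    (x : Fin N → ℂ) (hx : star x ⬝ᵥ x = 1) (b : ℝ)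
    (hb : ∀ z ∈ spectrum ℂ M, b ≤ z.re) :
    b ≤ (star x ⬝ᵥ M *ᵥ x).re := by
  obtain ⟨w, hw0, hw1, hrepr⟩ := rayleigh_repr hM x hx
  rw [hrepr]
  calc b = ∑ i, w i * b := by rw [← Finset.sum_mul, hw1, one_mul]
  _ ≤ ∑ i, w i * hM.eigenvalues i := by
      apply Finset.sum_le_sum
      intro i _
      exact mul_le_mul_of_nonneg_left (by simpa using hb _ (eig_mem_spectrum hM i)) (hw0 i)

lemma herm_form_real {N : ℕ} {M : Matrix (Fin N) (Fin N) ℂ} (hM : Mᴴ = M) (x : Fin N → ℂ) :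
    star x ⬝ᵥ M *ᵥ x = ((star x ⬝ᵥ M *ᵥ x).re : ℂ) := by
  rw [eq_comm, ← Complex.conj_eq_iff_re]
  calc (starRingEnd ℂ) (star x ⬝ᵥ M *ᵥ x) = star (star x ⬝ᵥ M *ᵥ x) := rfl
  _ = star (M *ᵥ x) ⬝ᵥ x := by rw [← star_dotProduct_star, star_star]
  _ = (star x ᵥ* Mᴴ) ⬝ᵥ x := by rw [star_mulVec]
  _ = star x ⬝ᵥ M *ᵥ x := by rw [hM, ← dotProduct_mulVec]

lemma herm_scalar {N : ℕ} (hN : 0 < N) {M : Matrix (Fin N) (Fin N) ℂ} (hM : M.IsHermitian)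
    (h : ∀ i j : Fin N, hM.eigenvalues i = hM.eigenvalues j) :
    ∃ c : ℝ, M = (c : ℂ) • (1 : Matrix (Fin N) (Fin N) ℂ) := by
  refine ⟨hM.eigenvalues ⟨0, hN⟩, ?_⟩
  have hd : diagonal (RCLike.ofReal ∘ hM.eigenvalues) =
      ((hM.eigenvalues ⟨0, hN⟩ : ℂ)) • (1 : Matrix (Fin N) (Fin N) ℂ) := by
    rw [smul_eq_diagonal_mul, mul_one]
    ext i j
    rcases eq_or_ne i j with rfl | hij
    · simp [h i ⟨0, hN⟩]
    · simp [diagonal_apply_ne _ hij]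
  calc M = _ * _ * _ := hM.spectral_theorem
  _ = (hM.eigenvalues ⟨0, hN⟩ : ℂ) • (1 : Matrix (Fin N) (Fin N) ℂ) := by
      rw [hd, mul_smul_comm, mul_one, smul_mul_assoc,
        ConjAct.ofConjAct_toConjAct, Units.mul_inv]

lemma basis_unit {N : ℕ} {M : Matrix (Fin N) (Fin N) ℂ} (hM : M.IsHermitian) (i : Fin N) :
    star ⇑(hM.eigenvectorBasis i) ⬝ᵥ ⇑(hM.eigenvectorBasis i) = 1 := by
  rw [dotProduct_comm, ← EuclideanSpace.inner_eq_star_dotProduct, inner_self_eq_norm_sq_to_K,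
    hM.eigenvectorBasis.orthonormal.1 i]
  norm_num

lemma basis_form {N : ℕ} {M : Matrix (Fin N) (Fin N) ℂ} (hM : M.IsHermitian) (i : Fin N) :
    star ⇑(hM.eigenvectorBasis i) ⬝ᵥ M *ᵥ ⇑(hM.eigenvectorBasis i) = (hM.eigenvalues i : ℂ) := by
  have : (hM.eigenvalues i) • ⇑(hM.eigenvectorBasis i)
      = (hM.eigenvalues i : ℂ) • ⇑(hM.eigenvectorBasis i) := by
    ext j; simp [Complex.real_smul]
  rw [hM.mulVec_eigenvectorBasis, this, dotProduct_smul, basis_unit hM i, smul_eq_mul, mul_one]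

lemma form_bound {N : ℕ} (H₀ : Matrix (Fin N) (Fin N) ℂ) (x : Fin N → ℂ)
    (hx : star x ⬝ᵥ x = 1) :
    |(star x ⬝ᵥ H₀ *ᵥ x).re| ≤ ∑ i, ∑ j, ‖H₀ i j‖ := by
  have hx2 : ∑ i, Complex.normSq (x i) = 1 := by
    have := congrArg Complex.re hx
    rw [dotProduct] at this
    simpa [Complex.mul_re, Complex.normSq_apply] using this
  have habs : ∀ i, ‖x i‖ ≤ 1 := by
    intro i
    rw [← Real.sqrt_one, Complex.norm_def]
    apply Real.sqrt_le_sqrt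
    rw [← hx2]
    exact Finset.single_le_sum (f := fun i => Complex.normSq (x i))
      (fun j _ => Complex.normSq_nonneg _) (Finset.mem_univ i)
  calc |(star x ⬝ᵥ H₀ *ᵥ x).re| ≤ ‖star x ⬝ᵥ H₀ *ᵥ x‖ := Complex.abs_re_le_norm _
  _ ≤ ∑ i, ‖star x i * (H₀ *ᵥ x) i‖ := by
      rw [dotProduct]; exact norm_sum_le _ _
  _ ≤ ∑ i, ∑ j, ‖H₀ i j‖ := by
      apply Finset.sum_le_sum
      intro i _
      calc ‖star x i * (H₀ *ᵥ x) i‖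
          = ‖x i‖ * ‖(H₀ *ᵥ x) i‖ := by
            rw [norm_mul]; simp
      _ ≤ 1 * ‖(H₀ *ᵥ x) i‖ := by
            apply mul_le_mul_of_nonneg_right (habs i) (norm_nonneg _)
      _ = ‖∑ j, H₀ i j * x j‖ := by rw [one_mul, mulVec, dotProduct]
      _ ≤ ∑ j, ‖H₀ i j * x j‖ := norm_sum_le _ _
      _ ≤ ∑ j, ‖H₀ i j‖ := by
            apply Finset.sum_le_sum
            intro j _
            rw [norm_mul]
            calc ‖H₀ i j‖ * ‖x j‖
                ≤ ‖H₀ i j‖ * 1 :=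
                  mul_le_mul_of_nonneg_left (habs j) (norm_nonneg _)
            _ = _ := mul_one _

lemma form_expand {N : ℕ} (H₀ H₁ : Matrix (Fin N) (Fin N) ℂ) (μ : ℝ) (x : Fin N → ℂ) :
    (star x ⬝ᵥ (((1 : ℝ) / (|μ| + 1)) • (H₀ + (μ : ℂ) • H₁)) *ᵥ x).re
    = (1 / (|μ| + 1)) * ((star x ⬝ᵥ H₀ *ᵥ x).re + μ * (star x ⬝ᵥ H₁ *ᵥ x).re) := by
  set r := (1 : ℝ) / (|μ| + 1) with hr
  rw [smul_mulVec, add_mulVec, smul_mulVec, dotProduct_smul, dotProduct_add,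
    dotProduct_smul, Complex.real_smul, smul_eq_mul]
  simp only [Complex.mul_re, Complex.add_re, Complex.add_im, Complex.ofReal_re, Complex.ofReal_im]
  ring

lemma form_cont {N : ℕ} (H : Matrix (Fin N) (Fin N) ℂ) (v : ℝ → Fin N → ℂ)
    (hv : Continuous v) : Continuous fun μ => (star (v μ) ⬝ᵥ H *ᵥ v μ).re := by
  have : (fun μ => star (v μ) ⬝ᵥ H *ᵥ v μ)
      = fun μ => ∑ i, ∑ j, (starRingEnd ℂ) (v μ i) * (H i j * v μ j) := by
    funext μ
    simp [dotProduct, mulVec, Finset.mul_sum]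
  refine Complex.continuous_re.comp ?_
  rw [this]
  refine continuous_finset_sum _ fun i _ => continuous_finset_sum _ fun j _ => ?_
  exact (Complex.continuous_conj.comp ((continuous_apply i).comp hv)).mul
    (continuous_const.mul ((continuous_apply j).comp hv))

/-- Let `H₀, H₁` be Hermitian, `H₁` with extreme eigenvalues `λ_max, λ_min`, and
suppose `H₀ + μH₁` has `N` distinct eigenvalues for every `μ ∈ ℝ`. Given continuous
unit eigenvector selections `v^max(μ)`, `v_min(μ)` for the largest and smallest
eigenvalues of `(H₀+μH₁)/(|μ|+1)` (equivalently of `H₀+μH₁`), either `H₁` is a scalar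
multiple of the identity, or there is a finite `μ` with
`⟨v^max(μ), H₁ v^max(μ)⟩ = ⟨v_min(μ), H₁ v_min(μ)⟩`. -/
theorem stmt17 {N : ℕ} (hN : 0 < N) (H₀ H₁ : Matrix (Fin N) (Fin N) ℂ)
    (h0 : H₀ᴴ = H₀) (h1 : H₁ᴴ = H₁)
    (hdistinct : ∀ μ : ℝ, (spectrum ℂ (H₀ + (μ : ℂ) • H₁)).ncard = N)
    (vmax vmin : ℝ → (Fin N → ℂ)) (lmax lmin : ℝ → ℝ)
    (hvmax_cont : Continuous vmax) (hvmin_cont : Continuous vmin)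
    (hvmax_unit : ∀ μ, star (vmax μ) ⬝ᵥ vmax μ = 1)
    (hvmin_unit : ∀ μ, star (vmin μ) ⬝ᵥ vmin μ = 1)
    (hvmax_eig : ∀ μ, (((1 : ℝ) / (|μ| + 1)) • (H₀ + (μ : ℂ) • H₁)).mulVec (vmax μ)
      = (lmax μ : ℂ) • vmax μ)
    (hvmin_eig : ∀ μ, (((1 : ℝ) / (|μ| + 1)) • (H₀ + (μ : ℂ) • H₁)).mulVec (vmin μ)
      = (lmin μ : ℂ) • vmin μ)
    (hvmax_top : ∀ μ, ∀ z ∈ spectrum ℂ (((1 : ℝ) / (|μ| + 1)) • (H₀ + (μ : ℂ) • H₁)),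
      z.re ≤ lmax μ)
    (hvmin_bot : ∀ μ, ∀ z ∈ spectrum ℂ (((1 : ℝ) / (|μ| + 1)) • (H₀ + (μ : ℂ) • H₁)),
      lmin μ ≤ z.re) :
    (∃ c : ℝ, H₁ = (c : ℂ) • (1 : Matrix (Fin N) (Fin N) ℂ)) ∨
    ∃ μ : ℝ, star (vmax μ) ⬝ᵥ H₁.mulVec (vmax μ)
      = star (vmin μ) ⬝ᵥ H₁.mulVec (vmin μ) := by
  classical
  have hH1 : H₁.IsHermitian := h1
  by_cases hscal : ∀ i j : Fin N, hH1.eigenvalues i = hH1.eigenvalues j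
  · exact Or.inl (herm_scalar hN hH1 hscal)
  right
  push_neg at hscal
  obtain ⟨i0, j0, hij⟩ := hscal
  obtain ⟨i, j, hpq⟩ : ∃ i j : Fin N, hH1.eigenvalues j < hH1.eigenvalues i := by
    rcases lt_or_gt_of_ne hij with h | h
    · exact ⟨j0, i0, h⟩
    · exact ⟨i0, j0, h⟩
  set p := hH1.eigenvalues i with hp
  set q := hH1.eigenvalues j with hq
  set up := ⇑(hH1.eigenvectorBasis i) with hup
  set uq := ⇑(hH1.eigenvectorBasis j) with huq
  have hup_unit : star up ⬝ᵥ up = 1 := basis_unit hH1 i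
  have huq_unit : star uq ⬝ᵥ uq = 1 := basis_unit hH1 j
  have hupH1 : (star up ⬝ᵥ H₁ *ᵥ up).re = p := by rw [hup, basis_form hH1 i]; simp [hp]
  have huqH1 : (star uq ⬝ᵥ H₁ *ᵥ uq).re = q := by rw [huq, basis_form hH1 j]; simp [hq]
  set C := ∑ i', ∑ j', ‖H₀ i' j'‖ with hC
  have hC0 : 0 ≤ C :=
    Finset.sum_nonneg fun _ _ => Finset.sum_nonneg fun _ _ => norm_nonneg _
  have hMherm : ∀ μ : ℝ, (((1 : ℝ) / (|μ| + 1)) • (H₀ + (μ : ℂ) • H₁)).IsHermitian := by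
    intro μ
    show _ᴴ = _
    rw [conjTranspose_smul, conjTranspose_add, conjTranspose_smul, h0, h1]
    simp [Complex.conj_ofReal]
  have hr : ∀ μ : ℝ, (0 : ℝ) < 1 / (|μ| + 1) := fun μ =>
    div_pos one_pos (by positivity)
  set a : ℝ → ℝ := fun μ => (star (vmax μ) ⬝ᵥ H₁ *ᵥ vmax μ).re with ha
  set b : ℝ → ℝ := fun μ => (star (vmin μ) ⬝ᵥ H₁ *ᵥ vmin μ).re with hb
  set A : ℝ → ℝ := fun μ => (star (vmax μ) ⬝ᵥ H₀ *ᵥ vmax μ).re with hA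
  set B : ℝ → ℝ := fun μ => (star (vmin μ) ⬝ᵥ H₀ *ᵥ vmin μ).re with hB
  have hida : ∀ μ : ℝ, (1 / (|μ| + 1)) * (A μ + μ * a μ) = lmax μ := by
    intro μ
    have h : star (vmax μ) ⬝ᵥ (((1 : ℝ) / (|μ| + 1)) • (H₀ + (μ : ℂ) • H₁)) *ᵥ (vmax μ)
        = ((lmax μ : ℝ) : ℂ) := by
      rw [hvmax_eig μ, dotProduct_smul, hvmax_unit μ, smul_eq_mul, mul_one]
    have h2 := congrArg Complex.re h
    rw [form_expand] at h2
    simpa using h2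
  have hidb : ∀ μ : ℝ, (1 / (|μ| + 1)) * (B μ + μ * b μ) = lmin μ := by
    intro μ
    have h : star (vmin μ) ⬝ᵥ (((1 : ℝ) / (|μ| + 1)) • (H₀ + (μ : ℂ) • H₁)) *ᵥ (vmin μ)
        = ((lmin μ : ℝ) : ℂ) := by
      rw [hvmin_eig μ, dotProduct_smul, hvmin_unit μ, smul_eq_mul, mul_one]
    have h2 := congrArg Complex.re h
    rw [form_expand] at h2
    simpa using h2
  have hmax_ge : ∀ (μ : ℝ) (u : Fin N → ℂ), star u ⬝ᵥ u = 1 →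
      (star u ⬝ᵥ H₀ *ᵥ u).re + μ * (star u ⬝ᵥ H₁ *ᵥ u).re ≤ A μ + μ * a μ := by
    intro μ u hu
    have h := rayleigh_le (hMherm μ) u hu (lmax μ) (hvmax_top μ)
    rw [form_expand, ← hida μ] at h
    exact le_of_mul_le_mul_left (by simpa [mul_comm] using h) (hr μ)
  have hmin_le : ∀ (μ : ℝ) (u : Fin N → ℂ), star u ⬝ᵥ u = 1 →
      B μ + μ * b μ ≤ (star u ⬝ᵥ H₀ *ᵥ u).re + μ * (star u ⬝ᵥ H₁ *ᵥ u).re := by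
    intro μ u hu
    have h := rayleigh_ge (hMherm μ) u hu (lmin μ) (hvmin_bot μ)
    rw [form_expand, ← hidb μ] at h
    exact le_of_mul_le_mul_left (by simpa [mul_comm] using h) (hr μ)
  have hAb : ∀ μ, |A μ| ≤ C := fun μ => form_bound H₀ (vmax μ) (hvmax_unit μ)
  have hBb : ∀ μ, |B μ| ≤ C := fun μ => form_bound H₀ (vmin μ) (hvmin_unit μ)
  have hupb : |(star up ⬝ᵥ H₀ *ᵥ up).re| ≤ C := form_bound H₀ up hup_unit
  have huqb : |(star uq ⬝ᵥ H₀ *ᵥ uq).re| ≤ C := form_bound H₀ uq huq_unit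
  set μp : ℝ := (4 * C + 1) / (p - q) with hμp
  have hpq' : 0 < p - q := sub_pos.mpr hpq
  have hμppos : 0 < μp := div_pos (by linarith) hpq'
  have hμval : μp * (p - q) = 4 * C + 1 := div_mul_cancel₀ _ (ne_of_gt hpq')
  -- positive side
  have h1p := hmax_ge μp up hup_unit
  have h2p := hmin_le μp uq huq_unit
  rw [hupH1] at h1p
  rw [huqH1] at h2p
  have hfp : 0 < a μp - b μp := by
    have hA1 := abs_le.mp (hAb μp)
    have hB1 := abs_le.mp (hBb μp)
    have hA2 := abs_le.mp hupb
    have hB2 := abs_le.mp huqb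
    nlinarith [hμppos]
  -- negative side
  have h1n := hmax_ge (-μp) uq huq_unit
  have h2n := hmin_le (-μp) up hup_unit
  rw [huqH1] at h1n
  rw [hupH1] at h2n
  have hfn : a (-μp) - b (-μp) < 0 := by
    have hA1 := abs_le.mp (hAb (-μp))
    have hB1 := abs_le.mp (hBb (-μp))
    have hA2 := abs_le.mp hupb
    have hB2 := abs_le.mp huqb
    nlinarith [hμppos]
  -- IVT
  have hcont : Continuous fun μ => a μ - b μ :=
    (form_cont H₁ vmax hvmax_cont).sub (form_cont H₁ vmin hvmin_cont)
  have hsub : Set.Icc ((fun μ => a μ - b μ) (-μp)) ((fun μ => a μ - b μ) μp)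
      ⊆ (fun μ => a μ - b μ) '' Set.Icc (-μp) μp :=
    intermediate_value_Icc (by linarith) hcont.continuousOn
  obtain ⟨μ, _, hμ0⟩ := hsub ⟨le_of_lt hfn, le_of_lt hfp⟩
  refine ⟨μ, ?_⟩
  have hab : a μ = b μ := by
    simpa [sub_eq_zero] using hμ0
  rw [herm_form_real h1 (vmax μ), herm_form_real h1 (vmin μ)]
  exact_mod_cast congrArg (fun r : ℝ => (r : ℂ)) hab
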